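/- Let (A,∘) be a pre-Lie algebra over a field of characteristic zero. Then there exists a compatible L-dendriform algebra structure on A (i.e., bilinear operations ▷, ◁ making (A,▷,◁) an L-dendriform algebra with x∘y = x▷y − y◁x for all x,y ∈ A) if and only if there exist a module (l,r,V) of (A,∘) and an invertible O-operator T : V → A of (A,∘) associated to (l,r,V). -/
import Mathlib


universe u v

/-- A pre-Lie algebra structure. -/
def IsPreLie {K : Type u} {A : Type v} [Field K] [AddCommGroup A] [Module K A]
    (mul : A →ₗ[K] A →ₗ[K] A) : Prop :=
  ∀ x y z : A, mul (mul x y) z - mul x (mul y z) = mul (mul y x) z - mul y (mul x z)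

/-- A module `(l,r,V)` of a pre-Lie algebra `(A,∘)`. -/
def IsPreLieModule {K : Type u} {A V : Type*} [Field K] [AddCommGroup A] [Module K A]
    [AddCommGroup V] [Module K V]
    (mul : A →ₗ[K] A →ₗ[K] A) (l r : A →ₗ[K] Module.End K V) : Prop :=
  (∀ x y : A, l x * l y - l (mul x y) = l y * l x - l (mul y x)) ∧
  (∀ x y : A, l x * r y - r y * l x = r (mul x y) - r y * r x)

/-- An O-operator of a pre-Lie algebra `(A,∘)` associated to a module `(l,r,V)`. -/
def IsOOperator {K : Type u} {A V : Type*} [Field K] [AddCommGroup A] [Module K A]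
    [AddCommGroup V] [Module K V]
    (mul : A →ₗ[K] A →ₗ[K] A) (l r : A →ₗ[K] Module.End K V) (T : V →ₗ[K] A) : Prop :=
  ∀ u v : V, mul (T u) (T v) = T (l (T u) v + r (T v) u)

/-- An L-dendriform algebra structure. -/
def IsLDendriform {K : Type u} {A : Type v} [Field K] [AddCommGroup A] [Module K A]
    (tr tl : A →ₗ[K] A →ₗ[K] A) : Prop :=
  (∀ x y z : A, tr x (tr y z) =
      tr (tr x y) z + tr (tl x y) z + tr y (tr x z) - tr (tl y x) z - tr (tr y x) z) ∧
  (∀ x y z : A, tr x (tl y z) =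
      tl (tr x y) z + tl y (tr x z) + tl y (tl x z) - tl (tl y x) z)

/-- A pre-Lie algebra `(A,∘)` admits a compatible L-dendriform algebra
structure (with `(A,∘)` as the associated vertical pre-Lie algebra, i.e.
`x∘y = x▷y − y◁x`) if and only if there exist a module `(l,r,V)` of `(A,∘)` and an
invertible O-operator `T : V → A` associated to `(l,r,V)`. -/
theorem compatible_LDendriform_iff_invertible_OOperator
    {K : Type u} {A : Type v} [Field K] [CharZero K] [AddCommGroup A] [Module K A]
    (mul : A →ₗ[K] A →ₗ[K] A) (h : IsPreLie mul) :
    (∃ tr tl : A →ₗ[K] A →ₗ[K] A,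
        IsLDendriform tr tl ∧ ∀ x y : A, mul x y = tr x y - tl y x) ↔
    (∃ (V : Type v) (_ : AddCommGroup V) (_ : Module K V)
        (l r : A →ₗ[K] Module.End K V) (T : V →ₗ[K] A),
        IsPreLieModule mul l r ∧ IsOOperator mul l r T ∧ Function.Bijective T) := by
  constructor
  · rintro ⟨tr, tl, ⟨h1, h2⟩, hc⟩
    refine ⟨A, ‹_›, ‹_›, tr, -tl, LinearMap.id, ⟨?_, ?_⟩, ?_, ?_⟩
    · intro x y
      ext z
      simp only [LinearMap.sub_apply, Module.End.mul_apply, hc]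
      simp only [map_sub, LinearMap.sub_apply]
      rw [h1 x y z]
      abel
    · intro x y
      ext z
      simp only [LinearMap.sub_apply, Module.End.mul_apply, LinearMap.neg_apply, hc]
      simp only [map_sub, map_neg, LinearMap.sub_apply, LinearMap.neg_apply]
      rw [h2 x y z]
      abel
    · intro u v
      simp only [LinearMap.id_coe, id_eq, LinearMap.add_apply, LinearMap.neg_apply]
      rw [hc]
      abel
    · exact Function.bijective_id
  · rintro ⟨V, _, _, l, r, T, ⟨hm1, hm2⟩, hO, hbij⟩
    let E : V ≃ₗ[K] A := LinearEquiv.ofBijective T hbij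
    have hTS : ∀ y : A, T (E.symm y) = y := fun y => E.apply_symm_apply y
    have hST : ∀ u : V, E.symm (T u) = u := fun u => E.symm_apply_apply u
    -- pointwise module identities
    have key1 : ∀ (x y : A) (w : V),
        l x (l y w) = l (mul x y) w + l y (l x w) - l (mul y x) w := by
      intro x y w
      have := LinearMap.congr_fun (hm1 x y) w
      simp only [LinearMap.sub_apply, Module.End.mul_apply] at this
      linear_combination (norm := abel) this
    have key2 : ∀ (x y : A) (w : V),
        l x (r y w) = r (mul x y) w + r y (l x w) - r y (r x w) := by
      intro x y w
      have := LinearMap.congr_fun (hm2 x y) w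
      simp only [LinearMap.sub_apply, Module.End.mul_apply] at this
      linear_combination (norm := abel) this
    -- the L-dendriform operations
    let tr : A →ₗ[K] A →ₗ[K] A :=
      { toFun := fun x => T ∘ₗ (l x) ∘ₗ (E.symm : A →ₗ[K] V)
        map_add' := fun a b => by ext c; simp
        map_smul' := fun a b => by ext c; simp }
    let tl : A →ₗ[K] A →ₗ[K] A :=
      { toFun := fun x => -(T ∘ₗ (r x) ∘ₗ (E.symm : A →ₗ[K] V))
        map_add' := fun a b => by ext c; simp; abel
        map_smul' := fun a b => by ext c; simp }
    have htr : ∀ x y : A, tr x y = T (l x (E.symm y)) := fun x y => rfl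
    have htl : ∀ x y : A, tl x y = -T (r x (E.symm y)) := fun x y => rfl
    have hmul : ∀ x y : A, mul x y = T (l x (E.symm y)) + T (r y (E.symm x)) := by
      intro x y
      have := hO (E.symm x) (E.symm y)
      rw [hTS, hTS] at this
      rw [this, map_add]
    have hcomp : ∀ x y : A, mul x y = tr x y - tl y x := by
      intro x y
      rw [htr, htl, hmul, sub_neg_eq_add]
    refine ⟨tr, tl, ⟨?_, ?_⟩, hcomp⟩
    · intro x y z
      simp only [htr, htl, hST, map_neg, LinearMap.neg_apply, neg_neg, map_sub, map_add]
      have hlm : ∀ a b : A, l (mul a b) (E.symm z)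
          = l (T (l a (E.symm b))) (E.symm z) + l (T (r b (E.symm a))) (E.symm z) := by
        intro a b
        rw [hmul a b, map_add, LinearMap.add_apply]
      have k := key1 x y (E.symm z)
      rw [hlm x y, hlm y x] at k
      have k2 := congrArg T k
      simp only [map_add, map_sub] at k2
      linear_combination (norm := abel) k2
    · intro x y z
      simp only [htr, htl, hST, map_neg, LinearMap.neg_apply, neg_neg, map_sub, map_add]
      have hrm : ∀ a b : A, r (mul a b) (E.symm z)
          = r (T (l a (E.symm b))) (E.symm z) + r (T (r b (E.symm a))) (E.symm z) := by
        intro a b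
        rw [hmul a b, map_add, LinearMap.add_apply]
      have k := key2 x y (E.symm z)
      rw [hrm x y] at k
      have k2 := congrArg T k
      simp only [map_add, map_sub] at k2
      linear_combination (norm := abel) -k2
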